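/- Soundness of unwinding for ta^◇-security: if there exist equivalence relations {≈_u}_{u∈D} on the states of system M satisfying DLR_M, OC_M, and WSC^◇_M (if α ⊨ dom(a) ↣ u and β ⊨ dom(a) ↣ u and s0·α ≈_u s0·β and s0·α ≈_{dom(a)} s0·β, then s0·αa ≈_u s0·βa) with respect to ↣, then M is ta^◇-secure with respect to ↣. -/
import Mathlib


open Classical

/-- Binary trees over actions, values of the `ta` purge functions. -/
inductive TATree (A : Type) : Type where
  | eps : TATree A
  | node : TATree A → TATree A → A → TATree A

/-- Run a deterministic system along a trace (newest action at the head of the list). -/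
def runL {S A : Type} (step : S → A → S) (s0 : S) : List A → S
  | [] => s0
  | a :: α => step (runL step s0 α) a

/-- The permissive purge function `ta^◇` for a dynamic policy `P`. -/
noncomputable def taD {D A : Type} (dm : A → D) (P : List A → D → D → Prop) :
    List A → D → TATree A
  | [], _ => TATree.eps
  | a :: α, u =>
    if P α (dm a) u then TATree.node (taD dm P α u) (taD dm P α (dm a)) a
    else taD dm P α u

/-- The unwinding relations: smallest family of equivalence relations on traces
satisfying WSC and DLR with respect to the dynamic policy `P`. -/
inductive Unw {D A : Type} (dm : A → D) (P : List A → D → D → Prop) :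
    D → List A → List A → Prop where
  | refl (u : D) (α : List A) : Unw dm P u α α
  | symm {u : D} {α β : List A} : Unw dm P u α β → Unw dm P u β α
  | trans {u : D} {α β γ : List A} : Unw dm P u α β → Unw dm P u β γ → Unw dm P u α γ
  | dlr (u : D) (α : List A) (a : A) : ¬ P α (dm a) u → Unw dm P u (a :: α) α
  | wsc (u : D) {α β : List A} (a : A) :
      Unw dm P u α β → Unw dm P (dm a) α β → Unw dm P u (a :: α) (a :: β)

/-- The prohibitive purge function `ta^□`, whose condition is distributed knowledge
of the policy edge, interpreted over the Kripke structure given by the unwinding relations. -/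
noncomputable def taB {D A : Type} (dm : A → D) (P : List A → D → D → Prop) :
    List A → D → TATree A
  | [], _ => TATree.eps
  | a :: α, u =>
    if (∀ β, Unw dm P u α β → Unw dm P (dm a) α β → P β (dm a) u) then
      TATree.node (taB dm P α u) (taB dm P α (dm a)) a
    else taB dm P α u

/-- soundness of the unwinding conditions DLR_M, WSC^◇_M, OC_M for
`ta^◇`-security. -/
theorem statement_17 {D A S O : Type} (dm : A → D) (P : List A → D → D → Prop)
    (step : S → A → S) (s0 : S) (obs : D → S → O)
    (R : D → S → S → Prop)
    (hequiv : ∀ u, Equivalence (R u))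
    (hDLR : ∀ u (α : List A) (a : A), ¬ P α (dm a) u →
        R u (runL step s0 (a :: α)) (runL step s0 α))
    (hWSCd : ∀ u (α β : List A) (a : A), P α (dm a) u → P β (dm a) u →
        R u (runL step s0 α) (runL step s0 β) →
        R (dm a) (runL step s0 α) (runL step s0 β) →
        R u (runL step s0 (a :: α)) (runL step s0 (a :: β)))
    (hOC : ∀ u (s t : S), R u s t → obs u s = obs u t) :
    ∀ u (α β : List A), taD dm P α u = taD dm P β u →
        obs u (runL step s0 α) = obs u (runL step s0 β) := by
  suffices key : ∀ n (α β : List A) u, α.length + β.length ≤ n →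
      taD dm P α u = taD dm P β u → R u (runL step s0 α) (runL step s0 β) by
    intro u α β h
    exact hOC u _ _ (key (α.length + β.length) α β u le_rfl h)
  intro n
  induction n with
  | zero =>
    intro α β u hlen h
    have : α = [] := by cases α <;> simp_all
    have : β = [] := by cases β <;> simp_all
    subst_vars
    exact (hequiv u).refl _
  | succ n ih =>
    intro α β u hlen h
    match α, β with
    | [], [] => exact (hequiv u).refl _
    | [], b :: β =>
      by_cases hp : P β (dm b) u
      · simp [taD, hp] at h
      · simp only [taD, if_neg hp] at h
        have := ih [] β u (by simpa using Nat.le_of_succ_le_succ (by simpa using hlen)) h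
        exact (hequiv u).trans this ((hequiv u).symm (hDLR u β b hp))
    | a :: α, [] =>
      by_cases hp : P α (dm a) u
      · simp [taD, hp] at h
      · simp only [taD, if_neg hp] at h
        have := ih α [] u (by simp at hlen ⊢; omega) h
        exact (hequiv u).trans (hDLR u α a hp) this
    | a :: α, b :: β =>
      have hlen' : α.length + β.length ≤ n := by simp at hlen; omega
      by_cases hpa : P α (dm a) u <;> by_cases hpb : P β (dm b) u
      · simp only [taD, if_pos hpa, if_pos hpb, TATree.node.injEq] at h
        obtain ⟨h1, h2, rfl⟩ := h
        exact hWSCd u α β a hpa hpb (ih α β u hlen' h1) (ih α β (dm a) hlen' h2)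
      · simp only [taD, if_pos hpa, if_neg hpb] at h
        have := ih (a :: α) β u (by simp at hlen ⊢; omega) (by simp only [taD, if_pos hpa]; exact h)
        exact (hequiv u).trans this ((hequiv u).symm (hDLR u β b hpb))
      · simp only [taD, if_neg hpa, if_pos hpb] at h
        have := ih α (b :: β) u (by simp at hlen ⊢; omega) (by simp only [taD, if_pos hpb]; exact h)
        exact (hequiv u).trans (hDLR u α a hpa) this
      · simp only [taD, if_neg hpa, if_neg hpb] at h
        have := ih α β u hlen' h
        exact (hequiv u).trans (hDLR u α a hpa)
          ((hequiv u).trans this ((hequiv u).symm (hDLR u β b hpb)))
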